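/- arXiv:2207.04990 — 2 statements merged into one kernel-verified Lean document; each statement's English description precedes it below -/
import Mathlib

section
/- Let λ = ((2n₁)^{2m₁}, …, (2n_k)^{2m_k}) be a quadrated partition with n₁ > 1, and suppose that m₁ > 1 or k > 1. Then SG(L(λ)) = SG(T(λ)) = 1 in LCTR. -/
/-- Remove the left column of a Young diagram: subtract 1 from each part and
omit nonpositive values. -/
def leftCol (l : List ℕ) : List ℕ := (l.map (· - 1)).filter (0 < ·)

/-- Remove the top row of a Young diagram. -/
def topRow (l : List ℕ) : List ℕ := l.tail

/-- Minimum excluded value of a set of naturals. -/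
noncomputable def mex (s : Set ℕ) : ℕ := sInf {n | n ∉ s}

def wt (l : List ℕ) : ℕ := l.sum + l.length

lemma wt_leftCol_le (l : List ℕ) : wt (leftCol l) ≤ l.sum := by
  induction l with
  | nil => simp [leftCol, wt]
  | cons a t ih =>
    simp only [leftCol, wt] at ih ⊢
    rw [List.map_cons, List.filter_cons]
    by_cases h : 0 < a - 1
    · simp only [h, decide_true, if_true, List.sum_cons, List.length_cons]
      omega
    · simp only [h, decide_false, Bool.false_eq_true, if_false, List.sum_cons]
      omega

lemma wt_leftCol_lt (l : List ℕ) (h : l ≠ []) : wt (leftCol l) < wt l := by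
  have h1 := wt_leftCol_le l
  have h2 : 0 < l.length := List.length_pos_iff.mpr h
  unfold wt at *
  omega

lemma wt_topRow_lt (l : List ℕ) (h : l ≠ []) : wt (topRow l) < wt l := by
  cases l with
  | nil => exact absurd rfl h
  | cons a t => simp [topRow, wt]; omega

/-- The Sprague–Grundy value of a position in the LCTR game. -/
noncomputable def SG (l : List ℕ) : ℕ :=
  if h : l = [] then 0
  else mex {SG (leftCol l), SG (topRow l)}
termination_by wt l
decreasing_by
  · exact wt_leftCol_lt l h
  · exact wt_topRow_lt l h

/-- A partition: a non-increasing list of positive integers. -/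
def IsPartition (l : List ℕ) : Prop := l.Pairwise (· ≥ ·) ∧ ∀ x ∈ l, 0 < x

/-- The conjugate partition: the `j`-th part (for `1 ≤ j ≤ l₁`) is the number
of parts of `l` that are at least `j`. -/
def conj (l : List ℕ) : List ℕ :=
  (List.range (l.headD 0)).map (fun j => l.countP (fun x => decide (j < x)))

/- ===== auxiliary development ===== -/

lemma mex_eq_of (S : Set ℕ) (n : ℕ) (h : n ∉ S) (h' : ∀ m, m < n → m ∈ S) : mex S = n := by
  have hne : {m | m ∉ S}.Nonempty := ⟨n, h⟩
  have hmem := Nat.sInf_mem hne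
  refine le_antisymm (Nat.sInf_le h) ?_
  by_contra hc
  push_neg at hc
  exact hmem (h' _ hc)

lemma mex_pair (x y : ℕ) :
    mex {x, y} = if x = 0 ∨ y = 0 then (if x = 1 ∨ y = 1 then 2 else 1) else 0 := by
  have hmem : ∀ m : ℕ, m ∈ ({x, y} : Set ℕ) ↔ (m = x ∨ m = y) := by intro m; simp
  split_ifs with h1 h2
  · refine mex_eq_of _ _ ?_ ?_
    · rw [hmem]; omega
    · intro m hm; rw [hmem]; omega
  · refine mex_eq_of _ _ ?_ ?_
    · rw [hmem]; omega
    · intro m hm; rw [hmem]; omega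
  · refine mex_eq_of _ _ ?_ ?_
    · rw [hmem]; omega
    · intro m hm; rw [hmem]; omega

lemma mex00 : mex {(0:ℕ), 0} = 1 := by rw [mex_pair]; norm_num
lemma mex01 : mex {(0:ℕ), 1} = 2 := by rw [mex_pair]; norm_num
lemma mex02 : mex {(0:ℕ), 2} = 1 := by rw [mex_pair]; norm_num
lemma mex10 : mex {(1:ℕ), 0} = 2 := by rw [mex_pair]; norm_num
lemma mex20 : mex {(2:ℕ), 0} = 1 := by rw [mex_pair]; norm_num
lemma mex11 : mex {(1:ℕ), 1} = 0 := by rw [mex_pair]; norm_num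
lemma mex12 : mex {(1:ℕ), 2} = 0 := by rw [mex_pair]; norm_num
lemma mex21 : mex {(2:ℕ), 1} = 0 := by rw [mex_pair]; norm_num
lemma mex22 : mex {(2:ℕ), 2} = 0 := by rw [mex_pair]; norm_num

lemma SG_nil : SG [] = 0 := by rw [SG]; simp

lemma SG_ne_nil (l : List ℕ) (h : l ≠ []) :
    SG l = mex {SG (leftCol l), SG (topRow l)} := by
  rw [SG, dif_neg h]

lemma leftCol_append (l1 l2 : List ℕ) : leftCol (l1 ++ l2) = leftCol l1 ++ leftCol l2 := by
  simp [leftCol]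

lemma leftCol_nil : leftCol [] = [] := rfl

lemma leftCol_replicate (a d : ℕ) (hd : 2 ≤ d) :
    leftCol (List.replicate a d) = List.replicate a (d - 1) := by
  unfold leftCol
  rw [List.map_replicate, List.filter_replicate]
  have : decide (0 < d - 1) = true := by simp; omega
  rw [this]
  simp

lemma leftCol_replicate_one (a : ℕ) : leftCol (List.replicate a 1) = [] := by
  unfold leftCol
  rw [List.map_replicate, List.filter_replicate]
  simp

lemma leftCol_length_le (l : List ℕ) : (leftCol l).length ≤ l.length := by
  unfold leftCol
  calc ((l.map (· - 1)).filter (0 < ·)).length ≤ (l.map (· - 1)).length :=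
        List.length_filter_le _ _
    _ = l.length := List.length_map _

/-- Structured tails: concatenations of blocks `v^(2e)` with strictly decreasing `v`
of fixed parity `p`, all bounded by `b`. -/
inductive Tail (p : ℕ) : ℕ → List ℕ → Prop
  | nil (b : ℕ) : Tail p b []
  | cons (v e b : ℕ) (t : List ℕ) (hv : 0 < v) (hb : v ≤ b) (hp : v % 2 = p)
      (he : 0 < e) (ht : Tail p (v - 1) t) : Tail p b (List.replicate (2 * e) v ++ t)

lemma Tail.bound_zero {p : ℕ} {t : List ℕ} (h : Tail p 0 t) : t = [] := by
  cases h with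
  | nil => rfl
  | cons v e t hv hb => omega

lemma tail_leftCol {p b : ℕ} {t : List ℕ} (h : Tail p b t) :
    Tail (1 - p) (b - 1) (leftCol t) := by
  induction h with
  | nil => exact Tail.nil _
  | cons v e b t hv hb hp he ht ih =>
    rw [leftCol_append]
    by_cases hv1 : v = 1
    · subst hv1
      rw [leftCol_replicate_one, ht.bound_zero, leftCol_nil, List.nil_append]
      exact Tail.nil _
    · rw [leftCol_replicate _ _ (by omega)]
      exact Tail.cons (v - 1) e (b - 1) _ (by omega) (by omega) (by omega) he ih

lemma tail_leftCol_length {b : ℕ} {t : List ℕ} (h : Tail 0 b t) :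
    (leftCol t).length = t.length := by
  induction h with
  | nil => rfl
  | cons v e b t hv hb hp he ht ih =>
    rw [leftCol_append, leftCol_replicate _ _ (by omega)]
    simp only [List.length_append, List.length_replicate]
    omega

/-- The Sprague–Grundy value formula on block-positions `d^a ++ t` with `|t| = s`. -/
def f (d a s : ℕ) : ℕ :=
  if d % 2 = 1 then
    if d = 1 then (if a % 2 = 1 then 1 else 2)
    else if a % 2 = 1 then (if a = 1 ∧ s = 0 then 1 else 0)
    else (if a = 2 ∧ s = 0 then 2 else 1)
  else
    if d = 2 then (if a % 2 = 1 then 2 else 0)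
    else if a % 2 = 1 then (if a = 1 ∧ s = 0 then 2 else 1)
    else 0

lemma fE1 (a s : ℕ) (h : a % 2 = 1) : f 1 a s = 1 := by unfold f; split_ifs <;> first | omega | tauto
lemma fE2 (a s : ℕ) (h : a % 2 = 0) : f 1 a s = 2 := by unfold f; split_ifs <;> first | omega | tauto
lemma fE3 (d s : ℕ) (h1 : d % 2 = 1) (h2 : 3 ≤ d) (h4 : s = 0) : f d 1 s = 1 := by
  unfold f; split_ifs <;> first | omega | tauto
lemma fE4 (d a s : ℕ) (h1 : d % 2 = 1) (h2 : 3 ≤ d) (h3 : a % 2 = 1)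
    (h4 : ¬(a = 1 ∧ s = 0)) : f d a s = 0 := by
  unfold f; split_ifs <;> first | omega | tauto
lemma fE5 (d s : ℕ) (h1 : d % 2 = 1) (h2 : 3 ≤ d) (h4 : s = 0) : f d 2 s = 2 := by
  unfold f; split_ifs <;> first | omega | tauto
lemma fE6 (d a s : ℕ) (h1 : d % 2 = 1) (h2 : 3 ≤ d) (h3 : a % 2 = 0)
    (h4 : ¬(a = 2 ∧ s = 0)) : f d a s = 1 := by
  unfold f; split_ifs <;> first | omega | tauto
lemma fE7 (a s : ℕ) (h : a % 2 = 1) : f 2 a s = 2 := by unfold f; split_ifs <;> first | omega | tauto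
lemma fE8 (a s : ℕ) (h : a % 2 = 0) : f 2 a s = 0 := by unfold f; split_ifs <;> first | omega | tauto
lemma fE9 (d s : ℕ) (h1 : d % 2 = 0) (h2 : 4 ≤ d) (h4 : s = 0) : f d 1 s = 2 := by
  unfold f; split_ifs <;> first | omega | tauto
lemma fE10 (d a s : ℕ) (h1 : d % 2 = 0) (h2 : 4 ≤ d) (h3 : a % 2 = 1)
    (h4 : ¬(a = 1 ∧ s = 0)) : f d a s = 1 := by
  unfold f; split_ifs <;> first | omega | tauto
lemma fE11 (d a s : ℕ) (h1 : d % 2 = 0) (h2 : 4 ≤ d) (h3 : a % 2 = 0) : f d a s = 0 := by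
  unfold f; split_ifs <;> first | omega | tauto

/-- mex step, case `d = 1`, `a ≥ 2`. -/
lemma stepB (a : ℕ) (ha : 1 ≤ a) : mex {0, f 1 a 0} = f 1 (a + 1) 0 := by
  by_cases h : a % 2 = 1
  · rw [fE1 _ _ h, fE2 _ _ (by omega), mex01]
  · rw [fE2 _ _ (by omega), fE1 _ _ (by omega), mex02]

/-- mex step, case `d ≥ 2`, `a = 1`, empty tail. -/
lemma stepC (d : ℕ) (hd : 2 ≤ d) : mex {f (d - 1) 1 0, 0} = f d 1 0 := by
  by_cases hp : d % 2 = 0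
  · -- d even: child = f (odd) 1 0
    by_cases hd2 : d = 2
    · subst hd2
      rw [show (2:ℕ) - 1 = 1 from rfl, fE1 _ _ (by omega), fE7 _ _ (by omega), mex10]
    · rw [fE3 (d-1) 0 (by omega) (by omega) rfl, fE9 d 0 hp (by omega) rfl, mex10]
  · -- d odd ≥ 3 : child = f (even) 1 0 = 2
    have h3 : 3 ≤ d := by omega
    by_cases hd3 : d = 3
    · subst hd3
      rw [show (3:ℕ) - 1 = 2 from rfl, fE7 _ _ (by omega), fE3 3 0 (by omega) (by omega) rfl,
        mex20]
    · rw [fE9 (d-1) 0 (by omega) (by omega) rfl, fE3 d 0 (by omega) h3 rfl, mex20]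

/-- mex step, case `d ≥ 2`, `a = 1`, tail a nonempty block position. -/
lemma stepD (d v e s' sL : ℕ) (hd : 2 ≤ d) (hv : 0 < v) (hvb : v ≤ d - 1)
    (hp : v % 2 = d % 2) (he : 0 < e) (hle : sL ≤ 2 * e + s')
    (hev : d % 2 = 0 → sL = 2 * e + s') :
    mex {f (d - 1) 1 sL, f v (2 * e) s'} = f d 1 (2 * e + s') := by
  by_cases hdp : d % 2 = 0
  · -- d even ≥ 4 (d=2 impossible), parent = 1, children both 0
    have hd4 : 4 ≤ d := by omega
    have hsl : sL = 2 * e + s' := hev hdp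
    have hc1 : f (d - 1) 1 sL = 0 :=
      fE4 (d-1) 1 sL (by omega) (by omega) (by omega) (by omega)
    have hc2 : f v (2 * e) s' = 0 := by
      by_cases hv2 : v = 2
      · subst hv2; exact fE8 _ _ (by omega)
      · exact fE11 v (2*e) s' (by omega) (by omega) (by omega)
    rw [hc1, hc2, mex00]
    exact (fE10 d 1 (2*e+s') hdp hd4 (by omega) (by omega)).symm
  · -- d odd ≥ 3, parent = 0, children in {1,2}
    have h3 : 3 ≤ d := by omega
    have hpar : f d 1 (2 * e + s') = 0 := fE4 d 1 _ (by omega) h3 (by omega) (by omega)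
    have hc1 : f (d - 1) 1 sL = 1 ∨ f (d - 1) 1 sL = 2 := by
      by_cases hd3 : d = 3
      · subst hd3; right; exact fE7 _ _ (by omega)
      · by_cases hsl0 : sL = 0
        · right; exact fE9 (d-1) sL (by omega) (by omega) hsl0
        · left; exact fE10 (d-1) 1 sL (by omega) (by omega) (by omega) (by omega)
    have hc2 : f v (2 * e) s' = 1 ∨ f v (2 * e) s' = 2 := by
      by_cases hv1 : v = 1
      · subst hv1; right; exact fE2 _ _ (by omega)
      · by_cases h20 : 2 * e = 2 ∧ s' = 0
        · right
          rw [h20.1, h20.2]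
          exact fE5 v 0 (by omega) (by omega) rfl
        · left; exact fE6 v (2*e) s' (by omega) (by omega) (by omega) h20
    rw [hpar]
    rcases hc1 with h1 | h1 <;> rcases hc2 with h2 | h2 <;> rw [h1, h2]
    · exact mex11
    · exact mex12
    · exact mex21
    · exact mex22

/-- mex step, case `d ≥ 2`, `a ≥ 2`. -/
lemma stepE (d a s sL : ℕ) (hd : 2 ≤ d) (ha : 1 ≤ a) (hle : sL ≤ s)
    (hev : d % 2 = 0 → sL = s) :
    mex {f (d - 1) (a + 1) sL, f d a s} = f d (a + 1) s := by
  by_cases hdp : d % 2 = 0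
  · have hsl : sL = s := hev hdp
    by_cases hd2 : d = 2
    · subst hd2
      rw [show (2:ℕ) - 1 = 1 from rfl]
      by_cases hap : (a + 1) % 2 = 1
      · rw [fE1 _ _ hap, fE8 _ _ (by omega), fE7 _ _ hap, mex10]
      · rw [fE2 _ _ (by omega), fE7 _ _ (by omega), fE8 _ _ (by omega), mex22]
    · have hd4 : 4 ≤ d := by omega
      by_cases hap : (a + 1) % 2 = 1
      · -- a+1 odd ≥ 3
        rw [fE4 (d-1) (a+1) sL (by omega) (by omega) hap (by omega),
          fE11 d a s hdp hd4 (by omega), mex00]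
        exact (fE10 d (a+1) s hdp hd4 hap (by omega)).symm
      · -- a+1 even
        have hpar : f d (a + 1) s = 0 := fE11 d (a+1) s hdp hd4 (by omega)
        have hc1 : f (d - 1) (a + 1) sL = 1 ∨ f (d - 1) (a + 1) sL = 2 := by
          by_cases h20 : a + 1 = 2 ∧ sL = 0
          · right
            rw [h20.1, h20.2]
            exact fE5 (d-1) 0 (by omega) (by omega) rfl
          · left; exact fE6 (d-1) (a+1) sL (by omega) (by omega) (by omega) h20
        have hc2 : f d a s = 1 ∨ f d a s = 2 := by
          by_cases h10 : a = 1 ∧ s = 0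
          · right
            rw [h10.1, h10.2]
            exact fE9 d 0 hdp hd4 rfl
          · left; exact fE10 d a s hdp hd4 (by omega) h10
        rw [hpar]
        rcases hc1 with h1 | h1 <;> rcases hc2 with h2 | h2 <;> rw [h1, h2]
        · exact mex11
        · exact mex12
        · exact mex21
        · exact mex22
  · -- d odd ≥ 3
    have h3 : 3 ≤ d := by omega
    by_cases hap : (a + 1) % 2 = 1
    · -- a+1 odd ≥ 3 : parent 0, children in {1,2}
      have hpar : f d (a + 1) s = 0 := fE4 d (a+1) s (by omega) h3 hap (by omega)
      have hc1 : f (d - 1) (a + 1) sL = 1 ∨ f (d - 1) (a + 1) sL = 2 := by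
        by_cases hd3 : d = 3
        · subst hd3; right; exact fE7 _ _ hap
        · left; exact fE10 (d-1) (a+1) sL (by omega) (by omega) hap (by omega)
      have hc2 : f d a s = 1 ∨ f d a s = 2 := by
        by_cases h20 : a = 2 ∧ s = 0
        · right
          rw [h20.1, h20.2]
          exact fE5 d 0 (by omega) h3 rfl
        · left; exact fE6 d a s (by omega) h3 (by omega) h20
      rw [hpar]
      rcases hc1 with h1 | h1 <;> rcases hc2 with h2 | h2 <;> rw [h1, h2]
      · exact mex11
      · exact mex12
      · exact mex21
      · exact mex22
    · -- a+1 even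
      have hc1 : f (d - 1) (a + 1) sL = 0 := by
        by_cases hd3 : d = 3
        · subst hd3; exact fE8 _ _ (by omega)
        · exact fE11 (d-1) (a+1) sL (by omega) (by omega) (by omega)
      by_cases h20 : a + 1 = 2 ∧ s = 0
      · have ha1 : a = 1 := by omega
        subst ha1
        rw [hc1, h20.2, fE3 d 0 (by omega) h3 rfl, mex01]
        exact (fE5 d 0 (by omega) h3 rfl).symm
      · have hc2 : f d a s = 0 := fE4 d a s (by omega) h3 (by omega) (by omega)
        rw [hc1, hc2, mex00]
        exact (fE6 d (a+1) s (by omega) h3 (by omega) h20).symm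

lemma main_SG : ∀ (N d a : ℕ) (t : List ℕ), 0 < d → 0 < a → Tail (d % 2) (d - 1) t →
    wt (List.replicate a d ++ t) ≤ N →
    SG (List.replicate a d ++ t) = f d a t.length := by
  intro N
  induction N with
  | zero =>
    intro d a t hd ha ht hw
    exfalso
    simp [wt] at hw
    omega
  | succ N ih =>
    intro d a t hd ha ht hw
    have hne : (List.replicate a d ++ t) ≠ [] := by
      intro hcon
      have := congrArg List.length hcon
      simp at this
      omega
    obtain ⟨a', rfl⟩ : ∃ a', a = a' + 1 := ⟨a - 1, by omega⟩
    have hwl : wt (leftCol (List.replicate (a' + 1) d ++ t)) ≤ N := by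
      have := wt_leftCol_lt _ hne; omega
    have hwt : wt (List.replicate a' d ++ t) ≤ N := by
      have h1 := wt_topRow_lt _ hne
      have h2 : topRow (List.replicate (a' + 1) d ++ t) = List.replicate a' d ++ t := by
        rw [List.replicate_succ]; rfl
      rw [h2] at h1; omega
    have htop : topRow (List.replicate (a' + 1) d ++ t) = List.replicate a' d ++ t := by
      rw [List.replicate_succ]; rfl
    rw [SG_ne_nil _ hne, htop]
    by_cases hd1 : d = 1
    · -- d = 1 : tail is empty, left column vanishes
      subst hd1
      have ht0 : t = [] := ht.bound_zero
      subst ht0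
      have hL : SG (leftCol (List.replicate (a' + 1) 1 ++ [])) = 0 := by
        rw [List.append_nil, leftCol_replicate_one]; exact SG_nil
      rw [hL]
      by_cases ha0 : a' = 0
      · subst ha0
        have hT : SG (List.replicate 0 1 ++ ([] : List ℕ)) = 0 := SG_nil
        rw [hT, mex00]
        exact (fE1 _ _ (by norm_num)).symm
      · have hT : SG (List.replicate a' 1 ++ ([] : List ℕ)) = f 1 a' [].length :=
          ih 1 a' [] (by omega) (by omega) (Tail.nil _) hwt
        rw [hT]
        exact stepB a' (by omega)
    · -- d ≥ 2
      have hd2 : 2 ≤ d := by omega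
      have hLeq : leftCol (List.replicate (a' + 1) d ++ t)
          = List.replicate (a' + 1) (d - 1) ++ leftCol t := by
        rw [leftCol_append, leftCol_replicate _ _ hd2]
      have hTail' : Tail ((d - 1) % 2) (d - 1 - 1) (leftCol t) := by
        have h1 := tail_leftCol ht
        have hpar : (d - 1) % 2 = 1 - d % 2 := by omega
        rw [hpar]
        exact h1
      have hL : SG (leftCol (List.replicate (a' + 1) d ++ t))
          = f (d - 1) (a' + 1) (leftCol t).length := by
        rw [hLeq]
        exact ih (d - 1) (a' + 1) _ (by omega) (by omega) hTail' (by rw [← hLeq]; exact hwl)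
      have hlen_le : (leftCol t).length ≤ t.length := leftCol_length_le t
      have heven : d % 2 = 0 → (leftCol t).length = t.length := by
        intro h0
        exact tail_leftCol_length (h0 ▸ ht)
      rw [hL]
      by_cases ha0 : a' = 0
      · subst ha0
        simp only [List.replicate_zero, List.nil_append] at hwt ⊢
        cases ht with
        | nil =>
          rw [SG_nil, leftCol_nil]
          simp only [List.length_nil]
          exact stepC d hd2
        | cons v e b t' hv hb hp he ht' =>
          have hT : SG (List.replicate (2 * e) v ++ t') = f v (2 * e) t'.length := by
            refine ih v (2 * e) t' hv (by omega) ?_ hwt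
            rw [hp]
            exact ht'
          have hlen : (List.replicate (2 * e) v ++ t').length = 2 * e + t'.length := by simp
          rw [hT, hlen]
          refine stepD d v e t'.length _ hd2 hv hb hp he ?_ ?_
          · rw [← hlen]; exact hlen_le
          · intro h0; rw [← hlen]; exact heven h0
      · have hT : SG (List.replicate a' d ++ t) = f d a' t.length :=
          ih d a' t hd (by omega) ht hwt
        rw [hT]
        exact stepE d a' t.length _ hd2 (by omega) hlen_le heven

lemma tail_flatten (k : ℕ) (n m : Fin k → ℕ) (hn : ∀ i, 0 < n i) (hm : ∀ i, 0 < m i)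
    (hdec : ∀ i j : Fin k, i < j → n j < n i) :
    ∀ (c j b : ℕ), k - j = c → (∀ i : Fin k, j ≤ i.val → 2 * n i ≤ b) →
      Tail 0 b (((List.ofFn (fun i => List.replicate (2 * m i) (2 * n i))).drop j).flatten) := by
  intro c
  induction c with
  | zero =>
    intro j b hc hb
    have hlen : (List.ofFn (fun i => List.replicate (2 * m i) (2 * n i))).length ≤ j := by
      simp; omega
    rw [List.drop_eq_nil_of_le hlen]
    exact Tail.nil _
  | succ c ihc =>
    intro j b hc hb
    have hj : j < k := by omega
    have hlen : j < (List.ofFn (fun i => List.replicate (2 * m i) (2 * n i))).length := by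
      simp [hj]
    rw [List.drop_eq_getElem_cons hlen, List.getElem_ofFn, List.flatten_cons]
    refine Tail.cons (2 * n ⟨j, hj⟩) (m ⟨j, hj⟩) b _ (by have := hn ⟨j, hj⟩; omega)
      (hb ⟨j, hj⟩ (le_refl j)) (by omega) (hm _) ?_
    refine ihc (j + 1) (2 * n ⟨j, hj⟩ - 1) (by omega) ?_
    intro i hi
    have hlt : n i < n ⟨j, hj⟩ := hdec ⟨j, hj⟩ i (by simp only [Fin.lt_def]; omega)
    omega


lemma ofFn_drop_cons {α : Type} (k j : ℕ) (g : Fin k → α) (hj : j < k) :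
    (List.ofFn g).drop j = g ⟨j, hj⟩ :: (List.ofFn g).drop (j + 1) := by
  rw [List.drop_eq_getElem_cons (by simpa using hj)]
  congr 1
  exact List.getElem_ofFn _

/-- Let `λ = ((2n₁)^{2m₁}, …, (2n_k)^{2m_k})` be a quadrated partition with
`n₁ > 1` and with `m₁ > 1` or `k > 1`. Then `SG(L(λ)) = SG(T(λ)) = 1`. -/
theorem SG_quadrated_moves (k : ℕ) (hk : 0 < k) (n m : Fin k → ℕ)
    (hn : ∀ i, 0 < n i) (hm : ∀ i, 0 < m i)
    (hdec : ∀ i j : Fin k, i < j → n j < n i)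
    (hn1 : 1 < n ⟨0, hk⟩) (h : 1 < m ⟨0, hk⟩ ∨ 1 < k) :
    SG (leftCol ((List.ofFn (fun i => List.replicate (2 * m i) (2 * n i))).flatten)) = 1 ∧
    SG (topRow ((List.ofFn (fun i => List.replicate (2 * m i) (2 * n i))).flatten)) = 1 := by
  have hsplit : (List.ofFn (fun i => List.replicate (2 * m i) (2 * n i))).flatten
      = List.replicate (2 * m ⟨0, hk⟩) (2 * n ⟨0, hk⟩)
        ++ ((List.ofFn (fun i => List.replicate (2 * m i) (2 * n i))).drop 1).flatten := by
    conv_lhs => rw [← List.drop_zero (l := List.ofFn (fun i => List.replicate (2 * m i) (2 * n i))),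
      ofFn_drop_cons k 0 _ hk]
    rw [List.flatten_cons]
  have htail : Tail 0 (2 * n ⟨0, hk⟩ - 1)
      ((List.ofFn (fun i => List.replicate (2 * m i) (2 * n i))).drop 1).flatten := by
    refine tail_flatten k n m hn hm hdec (k - 1) 1 _ rfl ?_
    intro i hi
    have hlt : n i < n ⟨0, hk⟩ := hdec ⟨0, hk⟩ i (by simp only [Fin.lt_def]; omega)
    omega
  have hrest_len : 1 < k →
      2 ≤ ((List.ofFn (fun i => List.replicate (2 * m i) (2 * n i))).drop 1).flatten.length := by
    intro hk1
    rw [ofFn_drop_cons k 1 _ hk1, List.flatten_cons]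
    have := hm ⟨1, hk1⟩
    simp only [List.length_append, List.length_replicate]
    omega
  have hn0 := hn ⟨0, hk⟩
  have hm0 := hm ⟨0, hk⟩
  constructor
  · -- left column
    have hLC : leftCol ((List.ofFn (fun i => List.replicate (2 * m i) (2 * n i))).flatten)
        = List.replicate (2 * m ⟨0, hk⟩) (2 * n ⟨0, hk⟩ - 1)
          ++ leftCol ((List.ofFn (fun i => List.replicate (2 * m i) (2 * n i))).drop 1).flatten := by
      rw [hsplit, leftCol_append, leftCol_replicate _ _ (by omega)]
    have htail' : Tail ((2 * n ⟨0, hk⟩ - 1) % 2) (2 * n ⟨0, hk⟩ - 1 - 1)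
        (leftCol ((List.ofFn (fun i => List.replicate (2 * m i) (2 * n i))).drop 1).flatten) := by
      have h1 := tail_leftCol htail
      have hpar : (2 * n ⟨0, hk⟩ - 1) % 2 = 1 - 0 := by omega
      rw [hpar]
      exact h1
    rw [hLC, main_SG (wt (List.replicate (2 * m ⟨0, hk⟩) (2 * n ⟨0, hk⟩ - 1)
        ++ leftCol ((List.ofFn (fun i => List.replicate (2 * m i) (2 * n i))).drop 1).flatten))
      (2 * n ⟨0, hk⟩ - 1) (2 * m ⟨0, hk⟩) _ (by omega) (by omega) htail' (le_refl _)]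
    refine fE6 _ _ _ (by omega) (by omega) (by omega) ?_
    intro hc
    rcases h with h | h
    · omega
    · have h2 := hrest_len h
      have h3 := tail_leftCol_length htail
      omega
  · -- top row
    obtain ⟨mm, hmm⟩ : ∃ mm, 2 * m ⟨0, hk⟩ = mm + 1 := ⟨2 * m ⟨0, hk⟩ - 1, by omega⟩
    have hTR : topRow ((List.ofFn (fun i => List.replicate (2 * m i) (2 * n i))).flatten)
        = List.replicate mm (2 * n ⟨0, hk⟩)
          ++ ((List.ofFn (fun i => List.replicate (2 * m i) (2 * n i))).drop 1).flatten := by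
      rw [hsplit, hmm, List.replicate_succ]
      rfl
    have htail2 : Tail ((2 * n ⟨0, hk⟩) % 2) (2 * n ⟨0, hk⟩ - 1)
        ((List.ofFn (fun i => List.replicate (2 * m i) (2 * n i))).drop 1).flatten := by
      have hpar : (2 * n ⟨0, hk⟩) % 2 = 0 := by omega
      rw [hpar]
      exact htail
    rw [hTR, main_SG (wt (List.replicate mm (2 * n ⟨0, hk⟩)
        ++ ((List.ofFn (fun i => List.replicate (2 * m i) (2 * n i))).drop 1).flatten))
      (2 * n ⟨0, hk⟩) mm _ (by omega) (by omega) htail2 (le_refl _)]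
    refine fE10 _ _ _ (by omega) (by omega) (by omega) ?_
    intro hc
    rcases h with h | h
    · omega
    · have h2 := hrest_len h
      omega
end

section
/- Let n, m, r, s be positive integers with m > r and n > r, and consider the thick Γ-partition (nᵐ, rˢ) with m parts equal to n followed by s parts equal to r. If n = r + 1, or n = r + 2, or n > r + 2 with n − r even, then SG((nᵐ, rˢ)) = 0 if r + m is even and SG((nᵐ, rˢ)) = 1 if r + m is odd. If n > r + 2 and n − r is odd, then SG((nᵐ, rˢ)) = 1 if m = r + 1; SG((nᵐ, rˢ)) = 2 if m = r + 2; SG((nᵐ, rˢ)) = 0 if m − r is odd and m − r ≥ 3; and SG((nᵐ, rˢ)) = 1 if m − r is even and m − r ≥ 4. -/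
lemma mex_pair_s16 (a b k : ℕ) (h1 : k ≠ a) (h2 : k ≠ b)
    (h3 : ∀ j, j < k → j = a ∨ j = b) : mex {a, b} = k := by
  have hk : k ∈ {n | n ∉ ({a, b} : Set ℕ)} := by simp [h1, h2]
  refine le_antisymm (Nat.sInf_le hk) ?_
  by_contra h
  push_neg at h
  have hmem : mex {a, b} ∈ {n | n ∉ ({a, b} : Set ℕ)} :=
    Nat.sInf_mem (⟨k, hk⟩ : Set.Nonempty {n | n ∉ ({a, b} : Set ℕ)})
  exact hmem (by rcases h3 _ h with he | he <;> simp [he])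

lemma mex_pair_eq (a b : ℕ) : mex {a, b} =
    if a ≠ 0 ∧ b ≠ 0 then 0 else if a ≠ 1 ∧ b ≠ 1 then 1
    else if a ≠ 2 ∧ b ≠ 2 then 2 else 3 := by
  split_ifs with h1 h2 h3
  · exact mex_pair_s16 a b 0 (Ne.symm h1.1) (Ne.symm h1.2) (by omega)
  · exact mex_pair_s16 a b 1 (Ne.symm h2.1) (Ne.symm h2.2) (by omega)
  · exact mex_pair_s16 a b 2 (Ne.symm h3.1) (Ne.symm h3.2) (by omega)
  · omega

def rectSG (n m : ℕ) : ℕ :=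
  if n = 1 then (if m % 2 = 1 then 1 else 2)
  else if n = 2 then (if m % 2 = 1 then 2 else 0)
  else if n % 2 = 1 then (if m = 1 then 1 else if m = 2 then 2 else if m % 2 = 1 then 0 else 1)
  else (if m = 1 then 2 else if m = 2 then 0 else if m % 2 = 1 then 1 else 0)

def G (d m r s : ℕ) : ℕ :=
  if r < m then
    (if d % 2 = 1 ∧ 3 ≤ d then
      (if m = r + 1 then 1 else if m = r + 2 then 2 else if (m - r) % 2 = 1 then 0 else 1)
    else (r + m) % 2)
  else if m + 3 ≤ r then (if s = 1 then (r + m) % 2 else (r + m + s) % 2)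
  else if m + 2 = r then (if s % 2 = 1 ∧ 3 ≤ s then 2 else 0)
  else (r + m) % 2

set_option maxHeartbeats 4000000 in
lemma gam_step_d (d m r s : ℕ) (hd : 1 ≤ d) (hr : 2 ≤ r) (hm : 2 ≤ m) (hs : 1 ≤ s) :
    G d m r s = mex {G d m (r - 1) s, G d (m - 1) r s} := by
  by_cases hc1 : r < m
  · by_cases hc2 : d % 2 = 1 ∧ 3 ≤ d
    · by_cases hc3 : m = r + 1
      · have e0 : G d m r s = 1 := by rw [G]; split_ifs <;> omega
        have e1 : G d m (r - 1) s = 2 := by rw [G]; split_ifs <;> omega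
        have e2 : G d (m - 1) r s = (r + (m - 1)) % 2 := by rw [G]; split_ifs <;> omega
        rw [mex_pair_eq, e0, e1, e2]
        split_ifs <;> omega
      · by_cases hc4 : m = r + 2
        · have e0 : G d m r s = 2 := by rw [G]; split_ifs <;> omega
          have e1 : G d m (r - 1) s = 0 := by rw [G]; split_ifs <;> omega
          have e2 : G d (m - 1) r s = 1 := by rw [G]; split_ifs <;> omega
          rw [mex_pair_eq, e0, e1, e2]
          split_ifs <;> omega
        · by_cases hc5 : (m - r) % 2 = 1
          · by_cases hc6 : (m - 1) = r + 2
            · have e0 : G d m r s = 0 := by rw [G]; split_ifs <;> omega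
              have e1 : G d m (r - 1) s = 1 := by rw [G]; split_ifs <;> omega
              have e2 : G d (m - 1) r s = 2 := by rw [G]; split_ifs <;> omega
              rw [mex_pair_eq, e0, e1, e2]
              split_ifs <;> omega
            · have e0 : G d m r s = 0 := by rw [G]; split_ifs <;> omega
              have e1 : G d m (r - 1) s = 1 := by rw [G]; split_ifs <;> omega
              have e2 : G d (m - 1) r s = 1 := by rw [G]; split_ifs <;> omega
              rw [mex_pair_eq, e0, e1, e2]
              split_ifs <;> omega
          · have e0 : G d m r s = 1 := by rw [G]; split_ifs <;> omega
            have e1 : G d m (r - 1) s = 0 := by rw [G]; split_ifs <;> omega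
            have e2 : G d (m - 1) r s = 0 := by rw [G]; split_ifs <;> omega
            rw [mex_pair_eq, e0, e1, e2]
            split_ifs <;> omega
    · by_cases hc7 : r < (m - 1)
      · have e0 : G d m r s = (r + m) % 2 := by rw [G]; split_ifs <;> omega
        have e1 : G d m (r - 1) s = ((r - 1) + m) % 2 := by rw [G]; split_ifs <;> omega
        have e2 : G d (m - 1) r s = (r + (m - 1)) % 2 := by rw [G]; split_ifs <;> omega
        rw [mex_pair_eq, e0, e1, e2]
        split_ifs <;> omega
      · have e0 : G d m r s = (r + m) % 2 := by rw [G]; split_ifs <;> omega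
        have e1 : G d m (r - 1) s = ((r - 1) + m) % 2 := by rw [G]; split_ifs <;> omega
        have e2 : G d (m - 1) r s = (r + (m - 1)) % 2 := by rw [G]; split_ifs <;> omega
        rw [mex_pair_eq, e0, e1, e2]
        split_ifs <;> omega
  · by_cases hc8 : m + 3 ≤ r
    · by_cases hc9 : s = 1
      · by_cases hc10 : m + 3 ≤ (r - 1)
        · have e0 : G d m r s = (r + m) % 2 := by rw [G]; split_ifs <;> omega
          have e1 : G d m (r - 1) s = ((r - 1) + m) % 2 := by rw [G]; split_ifs <;> omega
          have e2 : G d (m - 1) r s = (r + (m - 1)) % 2 := by rw [G]; split_ifs <;> omega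
          rw [mex_pair_eq, e0, e1, e2]
          split_ifs <;> omega
        · have e0 : G d m r s = (r + m) % 2 := by rw [G]; split_ifs <;> omega
          have e1 : G d m (r - 1) s = 0 := by rw [G]; split_ifs <;> omega
          have e2 : G d (m - 1) r s = (r + (m - 1)) % 2 := by rw [G]; split_ifs <;> omega
          rw [mex_pair_eq, e0, e1, e2]
          split_ifs <;> omega
      · by_cases hc11 : m + 3 ≤ (r - 1)
        · have e0 : G d m r s = (r + m + s) % 2 := by rw [G]; split_ifs <;> omega
          have e1 : G d m (r - 1) s = ((r - 1) + m + s) % 2 := by rw [G]; split_ifs <;> omega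
          have e2 : G d (m - 1) r s = (r + (m - 1) + s) % 2 := by rw [G]; split_ifs <;> omega
          rw [mex_pair_eq, e0, e1, e2]
          split_ifs <;> omega
        · by_cases hc12 : s % 2 = 1 ∧ 3 ≤ s
          · have e0 : G d m r s = (r + m + s) % 2 := by rw [G]; split_ifs <;> omega
            have e1 : G d m (r - 1) s = 2 := by rw [G]; split_ifs <;> omega
            have e2 : G d (m - 1) r s = (r + (m - 1) + s) % 2 := by rw [G]; split_ifs <;> omega
            rw [mex_pair_eq, e0, e1, e2]
            split_ifs <;> omega
          · have e0 : G d m r s = (r + m + s) % 2 := by rw [G]; split_ifs <;> omega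
            have e1 : G d m (r - 1) s = 0 := by rw [G]; split_ifs <;> omega
            have e2 : G d (m - 1) r s = (r + (m - 1) + s) % 2 := by rw [G]; split_ifs <;> omega
            rw [mex_pair_eq, e0, e1, e2]
            split_ifs <;> omega
    · by_cases hc13 : m + 2 = r
      · by_cases hc14 : s % 2 = 1 ∧ 3 ≤ s
        · have e0 : G d m r s = 2 := by rw [G]; split_ifs <;> omega
          have e1 : G d m (r - 1) s = ((r - 1) + m) % 2 := by rw [G]; split_ifs <;> omega
          have e2 : G d (m - 1) r s = (r + (m - 1) + s) % 2 := by rw [G]; split_ifs <;> omega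
          rw [mex_pair_eq, e0, e1, e2]
          split_ifs <;> omega
        · by_cases hc15 : s = 1
          · have e0 : G d m r s = 0 := by rw [G]; split_ifs <;> omega
            have e1 : G d m (r - 1) s = ((r - 1) + m) % 2 := by rw [G]; split_ifs <;> omega
            have e2 : G d (m - 1) r s = (r + (m - 1)) % 2 := by rw [G]; split_ifs <;> omega
            rw [mex_pair_eq, e0, e1, e2]
            split_ifs <;> omega
          · have e0 : G d m r s = 0 := by rw [G]; split_ifs <;> omega
            have e1 : G d m (r - 1) s = ((r - 1) + m) % 2 := by rw [G]; split_ifs <;> omega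
            have e2 : G d (m - 1) r s = (r + (m - 1) + s) % 2 := by rw [G]; split_ifs <;> omega
            rw [mex_pair_eq, e0, e1, e2]
            split_ifs <;> omega
      · by_cases hc16 : (r - 1) < m
        · by_cases hc17 : d % 2 = 1 ∧ 3 ≤ d
          · have e0 : G d m r s = (r + m) % 2 := by rw [G]; split_ifs <;> omega
            have e1 : G d m (r - 1) s = 1 := by rw [G]; split_ifs <;> omega
            have e2 : G d (m - 1) r s = (r + (m - 1)) % 2 := by rw [G]; split_ifs <;> omega
            rw [mex_pair_eq, e0, e1, e2]
            split_ifs <;> omega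
          · have e0 : G d m r s = (r + m) % 2 := by rw [G]; split_ifs <;> omega
            have e1 : G d m (r - 1) s = ((r - 1) + m) % 2 := by rw [G]; split_ifs <;> omega
            have e2 : G d (m - 1) r s = (r + (m - 1)) % 2 := by rw [G]; split_ifs <;> omega
            rw [mex_pair_eq, e0, e1, e2]
            split_ifs <;> omega
        · by_cases hc18 : s % 2 = 1 ∧ 3 ≤ s
          · have e0 : G d m r s = (r + m) % 2 := by rw [G]; split_ifs <;> omega
            have e1 : G d m (r - 1) s = ((r - 1) + m) % 2 := by rw [G]; split_ifs <;> omega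
            have e2 : G d (m - 1) r s = 2 := by rw [G]; split_ifs <;> omega
            rw [mex_pair_eq, e0, e1, e2]
            split_ifs <;> omega
          · have e0 : G d m r s = (r + m) % 2 := by rw [G]; split_ifs <;> omega
            have e1 : G d m (r - 1) s = ((r - 1) + m) % 2 := by rw [G]; split_ifs <;> omega
            have e2 : G d (m - 1) r s = 0 := by rw [G]; split_ifs <;> omega
            rw [mex_pair_eq, e0, e1, e2]
            split_ifs <;> omega

set_option maxHeartbeats 4000000 in
lemma gam_step_c (d m s : ℕ) (hd : 1 ≤ d) (hm : 2 ≤ m) (hs : 1 ≤ s) :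
    G d m 1 s = mex {rectSG d m, G d (m - 1) 1 s} := by
  by_cases hc1 : d % 2 = 1 ∧ 3 ≤ d
  · by_cases hc2 : m = 1 + 1
    · have e0 : G d m 1 s = 1 := by rw [G]; split_ifs <;> omega
      have e1 : rectSG d m = 2 := by rw [rectSG]; split_ifs <;> omega
      have e2 : G d (m - 1) 1 s = (1 + (m - 1)) % 2 := by rw [G]; split_ifs <;> omega
      rw [mex_pair_eq, e0, e1, e2]
      split_ifs <;> omega
    · by_cases hc3 : m = 1 + 2
      · have e0 : G d m 1 s = 2 := by rw [G]; split_ifs <;> omega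
        have e1 : rectSG d m = 0 := by rw [rectSG]; split_ifs <;> omega
        have e2 : G d (m - 1) 1 s = 1 := by rw [G]; split_ifs <;> omega
        rw [mex_pair_eq, e0, e1, e2]
        split_ifs <;> omega
      · by_cases hc4 : (m - 1) % 2 = 1
        · by_cases hc5 : (m - 1) = 1 + 2
          · have e0 : G d m 1 s = 0 := by rw [G]; split_ifs <;> omega
            have e1 : rectSG d m = 1 := by rw [rectSG]; split_ifs <;> omega
            have e2 : G d (m - 1) 1 s = 2 := by rw [G]; split_ifs <;> omega
            rw [mex_pair_eq, e0, e1, e2]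
            split_ifs <;> omega
          · have e0 : G d m 1 s = 0 := by rw [G]; split_ifs <;> omega
            have e1 : rectSG d m = 1 := by rw [rectSG]; split_ifs <;> omega
            have e2 : G d (m - 1) 1 s = 1 := by rw [G]; split_ifs <;> omega
            rw [mex_pair_eq, e0, e1, e2]
            split_ifs <;> omega
        · have e0 : G d m 1 s = 1 := by rw [G]; split_ifs <;> omega
          have e1 : rectSG d m = 0 := by rw [rectSG]; split_ifs <;> omega
          have e2 : G d (m - 1) 1 s = 0 := by rw [G]; split_ifs <;> omega
          rw [mex_pair_eq, e0, e1, e2]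
          split_ifs <;> omega
  · by_cases hc6 : d = 1
    · by_cases hc7 : 1 < (m - 1)
      · have e0 : G d m 1 s = (1 + m) % 2 := by rw [G]; split_ifs <;> omega
        have e1 : rectSG d m = 2 - m % 2 := by rw [rectSG]; split_ifs <;> omega
        have e2 : G d (m - 1) 1 s = (1 + (m - 1)) % 2 := by rw [G]; split_ifs <;> omega
        rw [mex_pair_eq, e0, e1, e2]
        split_ifs <;> omega
      · have e0 : G d m 1 s = (1 + m) % 2 := by rw [G]; split_ifs <;> omega
        have e1 : rectSG d m = 2 := by rw [rectSG]; split_ifs <;> omega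
        have e2 : G d (m - 1) 1 s = (1 + (m - 1)) % 2 := by rw [G]; split_ifs <;> omega
        rw [mex_pair_eq, e0, e1, e2]
        split_ifs <;> omega
    · by_cases hc8 : d = 2
      · by_cases hc9 : 1 < (m - 1)
        · have e0 : G d m 1 s = (1 + m) % 2 := by rw [G]; split_ifs <;> omega
          have e1 : rectSG d m = 2 * (m % 2) := by rw [rectSG]; split_ifs <;> omega
          have e2 : G d (m - 1) 1 s = (1 + (m - 1)) % 2 := by rw [G]; split_ifs <;> omega
          rw [mex_pair_eq, e0, e1, e2]
          split_ifs <;> omega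
        · have e0 : G d m 1 s = (1 + m) % 2 := by rw [G]; split_ifs <;> omega
          have e1 : rectSG d m = 0 := by rw [rectSG]; split_ifs <;> omega
          have e2 : G d (m - 1) 1 s = (1 + (m - 1)) % 2 := by rw [G]; split_ifs <;> omega
          rw [mex_pair_eq, e0, e1, e2]
          split_ifs <;> omega
      · by_cases hc10 : m = 2
        · have e0 : G d m 1 s = (1 + m) % 2 := by rw [G]; split_ifs <;> omega
          have e1 : rectSG d m = 0 := by rw [rectSG]; split_ifs <;> omega
          have e2 : G d (m - 1) 1 s = (1 + (m - 1)) % 2 := by rw [G]; split_ifs <;> omega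
          rw [mex_pair_eq, e0, e1, e2]
          split_ifs <;> omega
        · have e0 : G d m 1 s = (1 + m) % 2 := by rw [G]; split_ifs <;> omega
          have e1 : rectSG d m = m % 2 := by rw [rectSG]; split_ifs <;> omega
          have e2 : G d (m - 1) 1 s = (1 + (m - 1)) % 2 := by rw [G]; split_ifs <;> omega
          rw [mex_pair_eq, e0, e1, e2]
          split_ifs <;> omega

set_option maxHeartbeats 4000000 in
lemma gam_step_b (d r s : ℕ) (hd : 1 ≤ d) (hr : 2 ≤ r) (hs : 1 ≤ s) :
    G d 1 r s = mex {G d 1 (r - 1) s, rectSG r s} := by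
  by_cases hc1 : 1 + 3 ≤ r
  · by_cases hc2 : s = 1
    · by_cases hc3 : 1 + 3 ≤ (r - 1)
      · by_cases hc4 : r % 2 = 1
        · have e0 : G d 1 r s = (r + 1) % 2 := by rw [G]; split_ifs <;> omega
          have e1 : G d 1 (r - 1) s = ((r - 1) + 1) % 2 := by rw [G]; split_ifs <;> omega
          have e2 : rectSG r s = 1 := by rw [rectSG]; split_ifs <;> omega
          rw [mex_pair_eq, e0, e1, e2]
          split_ifs <;> omega
        · have e0 : G d 1 r s = (r + 1) % 2 := by rw [G]; split_ifs <;> omega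
          have e1 : G d 1 (r - 1) s = ((r - 1) + 1) % 2 := by rw [G]; split_ifs <;> omega
          have e2 : rectSG r s = 2 := by rw [rectSG]; split_ifs <;> omega
          rw [mex_pair_eq, e0, e1, e2]
          split_ifs <;> omega
      · have e0 : G d 1 r s = (r + 1) % 2 := by rw [G]; split_ifs <;> omega
        have e1 : G d 1 (r - 1) s = 0 := by rw [G]; split_ifs <;> omega
        have e2 : rectSG r s = 2 := by rw [rectSG]; split_ifs <;> omega
        rw [mex_pair_eq, e0, e1, e2]
        split_ifs <;> omega
    · by_cases hc5 : 1 + 3 ≤ (r - 1)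
      · by_cases hc6 : r % 2 = 1
        · by_cases hc7 : s = 2
          · have e0 : G d 1 r s = (r + 1 + s) % 2 := by rw [G]; split_ifs <;> omega
            have e1 : G d 1 (r - 1) s = ((r - 1) + 1 + s) % 2 := by rw [G]; split_ifs <;> omega
            have e2 : rectSG r s = 2 := by rw [rectSG]; split_ifs <;> omega
            rw [mex_pair_eq, e0, e1, e2]
            split_ifs <;> omega
          · have e0 : G d 1 r s = (r + 1 + s) % 2 := by rw [G]; split_ifs <;> omega
            have e1 : G d 1 (r - 1) s = ((r - 1) + 1 + s) % 2 := by rw [G]; split_ifs <;> omega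
            have e2 : rectSG r s = (s + 1) % 2 := by rw [rectSG]; split_ifs <;> omega
            rw [mex_pair_eq, e0, e1, e2]
            split_ifs <;> omega
        · by_cases hc8 : s = 2
          · have e0 : G d 1 r s = (r + 1 + s) % 2 := by rw [G]; split_ifs <;> omega
            have e1 : G d 1 (r - 1) s = ((r - 1) + 1 + s) % 2 := by rw [G]; split_ifs <;> omega
            have e2 : rectSG r s = 0 := by rw [rectSG]; split_ifs <;> omega
            rw [mex_pair_eq, e0, e1, e2]
            split_ifs <;> omega
          · have e0 : G d 1 r s = (r + 1 + s) % 2 := by rw [G]; split_ifs <;> omega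
            have e1 : G d 1 (r - 1) s = ((r - 1) + 1 + s) % 2 := by rw [G]; split_ifs <;> omega
            have e2 : rectSG r s = s % 2 := by rw [rectSG]; split_ifs <;> omega
            rw [mex_pair_eq, e0, e1, e2]
            split_ifs <;> omega
      · by_cases hc9 : s % 2 = 1 ∧ 3 ≤ s
        · have e0 : G d 1 r s = (r + 1 + s) % 2 := by rw [G]; split_ifs <;> omega
          have e1 : G d 1 (r - 1) s = 2 := by rw [G]; split_ifs <;> omega
          have e2 : rectSG r s = 1 := by rw [rectSG]; split_ifs <;> omega
          rw [mex_pair_eq, e0, e1, e2]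
          split_ifs <;> omega
        · by_cases hc10 : s = 2
          · have e0 : G d 1 r s = (r + 1 + s) % 2 := by rw [G]; split_ifs <;> omega
            have e1 : G d 1 (r - 1) s = 0 := by rw [G]; split_ifs <;> omega
            have e2 : rectSG r s = 0 := by rw [rectSG]; split_ifs <;> omega
            rw [mex_pair_eq, e0, e1, e2]
            split_ifs <;> omega
          · have e0 : G d 1 r s = (r + 1 + s) % 2 := by rw [G]; split_ifs <;> omega
            have e1 : G d 1 (r - 1) s = 0 := by rw [G]; split_ifs <;> omega
            have e2 : rectSG r s = 0 := by rw [rectSG]; split_ifs <;> omega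
            rw [mex_pair_eq, e0, e1, e2]
            split_ifs <;> omega
  · by_cases hc11 : 1 + 2 = r
    · by_cases hc12 : s % 2 = 1 ∧ 3 ≤ s
      · have e0 : G d 1 r s = 2 := by rw [G]; split_ifs <;> omega
        have e1 : G d 1 (r - 1) s = ((r - 1) + 1) % 2 := by rw [G]; split_ifs <;> omega
        have e2 : rectSG r s = 0 := by rw [rectSG]; split_ifs <;> omega
        rw [mex_pair_eq, e0, e1, e2]
        split_ifs <;> omega
      · by_cases hc13 : s = 1
        · have e0 : G d 1 r s = 0 := by rw [G]; split_ifs <;> omega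
          have e1 : G d 1 (r - 1) s = ((r - 1) + 1) % 2 := by rw [G]; split_ifs <;> omega
          have e2 : rectSG r s = 1 := by rw [rectSG]; split_ifs <;> omega
          rw [mex_pair_eq, e0, e1, e2]
          split_ifs <;> omega
        · by_cases hc14 : s = 2
          · have e0 : G d 1 r s = 0 := by rw [G]; split_ifs <;> omega
            have e1 : G d 1 (r - 1) s = ((r - 1) + 1) % 2 := by rw [G]; split_ifs <;> omega
            have e2 : rectSG r s = 2 := by rw [rectSG]; split_ifs <;> omega
            rw [mex_pair_eq, e0, e1, e2]
            split_ifs <;> omega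
          · have e0 : G d 1 r s = 0 := by rw [G]; split_ifs <;> omega
            have e1 : G d 1 (r - 1) s = ((r - 1) + 1) % 2 := by rw [G]; split_ifs <;> omega
            have e2 : rectSG r s = 1 := by rw [rectSG]; split_ifs <;> omega
            rw [mex_pair_eq, e0, e1, e2]
            split_ifs <;> omega
    · have e0 : G d 1 r s = (r + 1) % 2 := by rw [G]; split_ifs <;> omega
      have e1 : G d 1 (r - 1) s = ((r - 1) + 1) % 2 := by rw [G]; split_ifs <;> omega
      have e2 : rectSG r s = 2 * (s % 2) := by rw [rectSG]; split_ifs <;> omega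
      rw [mex_pair_eq, e0, e1, e2]
      split_ifs <;> omega

set_option maxHeartbeats 4000000 in
lemma gam_step_a (d s : ℕ) (hd : 1 ≤ d) (hs : 1 ≤ s) :
    G d 1 1 s = mex {rectSG d 1, rectSG 1 s} := by
  by_cases hc1 : d = 1
  · have e0 : G d 1 1 s = (1 + 1) % 2 := by rw [G]; split_ifs <;> omega
    have e1 : rectSG d 1 = 1 := by rw [rectSG]; split_ifs <;> omega
    have e2 : rectSG 1 s = 2 - s % 2 := by rw [rectSG]; split_ifs <;> omega
    rw [mex_pair_eq, e0, e1, e2]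
    split_ifs <;> omega
  · by_cases hc2 : d = 2
    · have e0 : G d 1 1 s = (1 + 1) % 2 := by rw [G]; split_ifs <;> omega
      have e1 : rectSG d 1 = 2 := by rw [rectSG]; split_ifs <;> omega
      have e2 : rectSG 1 s = 2 - s % 2 := by rw [rectSG]; split_ifs <;> omega
      rw [mex_pair_eq, e0, e1, e2]
      split_ifs <;> omega
    · by_cases hc3 : d % 2 = 1
      · have e0 : G d 1 1 s = (1 + 1) % 2 := by rw [G]; split_ifs <;> omega
        have e1 : rectSG d 1 = 1 := by rw [rectSG]; split_ifs <;> omega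
        have e2 : rectSG 1 s = 2 - s % 2 := by rw [rectSG]; split_ifs <;> omega
        rw [mex_pair_eq, e0, e1, e2]
        split_ifs <;> omega
      · have e0 : G d 1 1 s = (1 + 1) % 2 := by rw [G]; split_ifs <;> omega
        have e1 : rectSG d 1 = 2 := by rw [rectSG]; split_ifs <;> omega
        have e2 : rectSG 1 s = 2 - s % 2 := by rw [rectSG]; split_ifs <;> omega
        rw [mex_pair_eq, e0, e1, e2]
        split_ifs <;> omega

set_option maxHeartbeats 4000000 in
lemma rect_step_d (d m : ℕ) (hn : 2 ≤ d) (hm : 2 ≤ m) :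
    rectSG d m = mex {rectSG (d - 1) m, rectSG d (m - 1)} := by
  by_cases hc1 : d = 2
  · have e0 : rectSG d m = 2 * (m % 2) := by rw [rectSG]; split_ifs <;> omega
    have e1 : rectSG (d - 1) m = 2 - m % 2 := by rw [rectSG]; split_ifs <;> omega
    have e2 : rectSG d (m - 1) = 2 * ((m - 1) % 2) := by rw [rectSG]; split_ifs <;> omega
    rw [mex_pair_eq, e0, e1, e2]
    split_ifs <;> omega
  · by_cases hc2 : d % 2 = 1
    · by_cases hc3 : m = 2
      · by_cases hc4 : (d - 1) = 2
        · have e0 : rectSG d m = 2 := by rw [rectSG]; split_ifs <;> omega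
          have e1 : rectSG (d - 1) m = 0 := by rw [rectSG]; split_ifs <;> omega
          have e2 : rectSG d (m - 1) = 1 := by rw [rectSG]; split_ifs <;> omega
          rw [mex_pair_eq, e0, e1, e2]
          split_ifs <;> omega
        · have e0 : rectSG d m = 2 := by rw [rectSG]; split_ifs <;> omega
          have e1 : rectSG (d - 1) m = 0 := by rw [rectSG]; split_ifs <;> omega
          have e2 : rectSG d (m - 1) = 1 := by rw [rectSG]; split_ifs <;> omega
          rw [mex_pair_eq, e0, e1, e2]
          split_ifs <;> omega
      · by_cases hc5 : (d - 1) = 2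
        · by_cases hc6 : (m - 1) = 2
          · have e0 : rectSG d m = 0 := by rw [rectSG]; split_ifs <;> omega
            have e1 : rectSG (d - 1) m = 2 := by rw [rectSG]; split_ifs <;> omega
            have e2 : rectSG d (m - 1) = 2 := by rw [rectSG]; split_ifs <;> omega
            rw [mex_pair_eq, e0, e1, e2]
            split_ifs <;> omega
          · have e0 : rectSG d m = (m + 1) % 2 := by rw [rectSG]; split_ifs <;> omega
            have e1 : rectSG (d - 1) m = 2 * (m % 2) := by rw [rectSG]; split_ifs <;> omega
            have e2 : rectSG d (m - 1) = ((m - 1) + 1) % 2 := by rw [rectSG]; split_ifs <;> omega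
            rw [mex_pair_eq, e0, e1, e2]
            split_ifs <;> omega
        · by_cases hc7 : (m - 1) = 2
          · have e0 : rectSG d m = 0 := by rw [rectSG]; split_ifs <;> omega
            have e1 : rectSG (d - 1) m = 1 := by rw [rectSG]; split_ifs <;> omega
            have e2 : rectSG d (m - 1) = 2 := by rw [rectSG]; split_ifs <;> omega
            rw [mex_pair_eq, e0, e1, e2]
            split_ifs <;> omega
          · have e0 : rectSG d m = (m + 1) % 2 := by rw [rectSG]; split_ifs <;> omega
            have e1 : rectSG (d - 1) m = m % 2 := by rw [rectSG]; split_ifs <;> omega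
            have e2 : rectSG d (m - 1) = ((m - 1) + 1) % 2 := by rw [rectSG]; split_ifs <;> omega
            rw [mex_pair_eq, e0, e1, e2]
            split_ifs <;> omega
    · by_cases hc8 : m = 2
      · have e0 : rectSG d m = 0 := by rw [rectSG]; split_ifs <;> omega
        have e1 : rectSG (d - 1) m = 2 := by rw [rectSG]; split_ifs <;> omega
        have e2 : rectSG d (m - 1) = 2 := by rw [rectSG]; split_ifs <;> omega
        rw [mex_pair_eq, e0, e1, e2]
        split_ifs <;> omega
      · by_cases hc9 : (m - 1) = 2
        · have e0 : rectSG d m = 1 := by rw [rectSG]; split_ifs <;> omega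
          have e1 : rectSG (d - 1) m = 0 := by rw [rectSG]; split_ifs <;> omega
          have e2 : rectSG d (m - 1) = 0 := by rw [rectSG]; split_ifs <;> omega
          rw [mex_pair_eq, e0, e1, e2]
          split_ifs <;> omega
        · have e0 : rectSG d m = m % 2 := by rw [rectSG]; split_ifs <;> omega
          have e1 : rectSG (d - 1) m = (m + 1) % 2 := by rw [rectSG]; split_ifs <;> omega
          have e2 : rectSG d (m - 1) = (m - 1) % 2 := by rw [rectSG]; split_ifs <;> omega
          rw [mex_pair_eq, e0, e1, e2]
          split_ifs <;> omega

set_option maxHeartbeats 4000000 in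
lemma rect_step_b (m : ℕ) (hm : 2 ≤ m) :
    rectSG 1 m = mex {0, rectSG 1 (m - 1)} := by
  have e0 : rectSG 1 m = 2 - m % 2 := by rw [rectSG]; split_ifs <;> omega
  have e2 : rectSG 1 (m - 1) = 2 - (m - 1) % 2 := by rw [rectSG]; split_ifs <;> omega
  rw [mex_pair_eq, e0, e2]
  split_ifs <;> omega

set_option maxHeartbeats 4000000 in
lemma rect_step_c (d : ℕ) (hn : 2 ≤ d) :
    rectSG d 1 = mex {rectSG (d - 1) 1, 0} := by
  by_cases hc1 : d = 2
  · have e0 : rectSG d 1 = 2 := by rw [rectSG]; split_ifs <;> omega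
    have e1 : rectSG (d - 1) 1 = 1 := by rw [rectSG]; split_ifs <;> omega
    rw [mex_pair_eq, e0, e1]
    split_ifs <;> omega
  · by_cases hc2 : d % 2 = 1
    · by_cases hc3 : (d - 1) = 2
      · have e0 : rectSG d 1 = 1 := by rw [rectSG]; split_ifs <;> omega
        have e1 : rectSG (d - 1) 1 = 2 := by rw [rectSG]; split_ifs <;> omega
        rw [mex_pair_eq, e0, e1]
        split_ifs <;> omega
      · have e0 : rectSG d 1 = 1 := by rw [rectSG]; split_ifs <;> omega
        have e1 : rectSG (d - 1) 1 = 2 := by rw [rectSG]; split_ifs <;> omega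
        rw [mex_pair_eq, e0, e1]
        split_ifs <;> omega
    · have e0 : rectSG d 1 = 2 := by rw [rectSG]; split_ifs <;> omega
      have e1 : rectSG (d - 1) 1 = 1 := by rw [rectSG]; split_ifs <;> omega
      rw [mex_pair_eq, e0, e1]
      split_ifs <;> omega


lemma leftCol_rep (n m : ℕ) :
    leftCol (List.replicate m n) = if 0 < n - 1 then List.replicate m (n - 1) else [] := by
  simp [leftCol, List.map_replicate, List.filter_replicate]

lemma leftCol_rep_app (n m r s : ℕ) :
    leftCol (List.replicate m n ++ List.replicate s r) =
      (if 0 < n - 1 then List.replicate m (n - 1) else []) ++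
      (if 0 < r - 1 then List.replicate s (r - 1) else []) := by
  simp [leftCol, List.filter_append, List.map_replicate, List.filter_replicate]

lemma topRow_rep (n m : ℕ) :
    topRow (List.replicate m n) = List.replicate (m - 1) n := List.tail_replicate

lemma topRow_rep_app (n m r s : ℕ) (hm : 1 ≤ m) :
    topRow (List.replicate m n ++ List.replicate s r) =
      List.replicate (m - 1) n ++ List.replicate s r := by
  obtain ⟨m', rfl⟩ : ∃ m', m = m' + 1 := ⟨m - 1, by omega⟩
  simp [topRow, List.replicate_succ]

lemma rect_eq_aux : ∀ k n m : ℕ, n + m ≤ k → 1 ≤ n → 1 ≤ m →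
    SG (List.replicate m n) = rectSG n m := by
  intro k
  induction k with
  | zero => intro n m h hn hm; omega
  | succ k ih =>
    intro n m hk hn hm
    have hne : List.replicate m n ≠ [] := by simp; omega
    rw [SG, dif_neg hne]
    have hA : SG (leftCol (List.replicate m n)) = if n = 1 then 0 else rectSG (n - 1) m := by
      by_cases hn1 : n = 1
      · rw [leftCol_rep, if_neg (by omega), if_pos hn1]; exact SG_nil
      · rw [leftCol_rep, if_pos (by omega), if_neg hn1]
        exact ih (n - 1) m (by omega) (by omega) hm
    have hB : SG (topRow (List.replicate m n)) = if m = 1 then 0 else rectSG n (m - 1) := by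
      rw [topRow_rep]
      by_cases hm1 : m = 1
      · rw [if_pos hm1]; subst hm1; simpa using SG_nil
      · rw [if_neg hm1]; exact ih n (m - 1) (by omega) hn (by omega)
    rw [hA, hB]
    by_cases hn1 : n = 1 <;> by_cases hm1 : m = 1
    · rw [if_pos hn1, if_pos hm1]; subst hn1; subst hm1
      rw [mex_pair_eq]; norm_num [rectSG]
    · rw [if_pos hn1, if_neg hm1]; subst hn1
      exact (rect_step_b m (by omega)).symm
    · rw [if_neg hn1, if_pos hm1]; subst hm1
      exact (rect_step_c n (by omega)).symm
    · rw [if_neg hn1, if_neg hm1]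
      exact (rect_step_d n m (by omega) (by omega)).symm

lemma rect_eq (n m : ℕ) (hn : 1 ≤ n) (hm : 1 ≤ m) :
    SG (List.replicate m n) = rectSG n m := rect_eq_aux (n + m) n m le_rfl hn hm

lemma gam_eq_aux : ∀ k n m r s : ℕ, n + m ≤ k → r + 1 ≤ n → 1 ≤ r → 1 ≤ m → 1 ≤ s →
    SG (List.replicate m n ++ List.replicate s r) = G (n - r) m r s := by
  intro k
  induction k with
  | zero => intro n m r s h hn hr hm hs; omega
  | succ k ih =>
    intro n m r s hk hn hr hm hs
    have hne : List.replicate m n ++ List.replicate s r ≠ [] := by simp; omega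
    rw [SG, dif_neg hne]
    have hA : SG (leftCol (List.replicate m n ++ List.replicate s r)) =
        if r = 1 then rectSG (n - r) m else G (n - r) m (r - 1) s := by
      rw [leftCol_rep_app, if_pos (by omega : 0 < n - 1)]
      by_cases hr1 : r = 1
      · rw [if_neg (by omega : ¬ 0 < r - 1), if_pos hr1, List.append_nil]
        subst hr1
        exact rect_eq (n - 1) m (by omega) hm
      · rw [if_pos (by omega : 0 < r - 1), if_neg hr1]
        have h1 := ih (n - 1) m (r - 1) s (by omega) (by omega) (by omega) hm hs
        rwa [show n - 1 - (r - 1) = n - r from by omega] at h1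
    have hB : SG (topRow (List.replicate m n ++ List.replicate s r)) =
        if m = 1 then rectSG r s else G (n - r) (m - 1) r s := by
      rw [topRow_rep_app n m r s hm]
      by_cases hm1 : m = 1
      · rw [if_pos hm1]; subst hm1
        simpa using rect_eq r s hr hs
      · rw [if_neg hm1]
        exact ih n (m - 1) r s (by omega) hn hr (by omega) hs
    rw [hA, hB]
    by_cases hr1 : r = 1 <;> by_cases hm1 : m = 1
    · rw [if_pos hr1, if_pos hm1]; subst hr1; subst hm1
      exact (gam_step_a (n - 1) s (by omega) hs).symm
    · rw [if_pos hr1, if_neg hm1]; subst hr1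
      exact (gam_step_c (n - 1) m s (by omega) (by omega) hs).symm
    · rw [if_neg hr1, if_pos hm1]; subst hm1
      exact (gam_step_b (n - r) r s (by omega) (by omega) hs).symm
    · rw [if_neg hr1, if_neg hm1]
      exact (gam_step_d (n - r) m r s (by omega) (by omega) (by omega) hs).symm


/-- Sprague–Grundy values of all thick Γ-partitions `(nᵐ, rˢ)` with `m > r`
and `n > r`. -/
theorem SG_thick_gamma (n m r s : ℕ) (hn0 : 0 < n) (hm0 : 0 < m)
    (hr : 0 < r) (hs : 0 < s) (hm : r < m) (hn : r < n) :
    ((n = r + 1 ∨ n = r + 2 ∨ (r + 2 < n ∧ Even (n - r))) →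
      (Even (r + m) → SG (List.replicate m n ++ List.replicate s r) = 0) ∧
      (Odd (r + m) → SG (List.replicate m n ++ List.replicate s r) = 1)) ∧
    ((r + 2 < n ∧ Odd (n - r)) →
      (m = r + 1 → SG (List.replicate m n ++ List.replicate s r) = 1) ∧
      (m = r + 2 → SG (List.replicate m n ++ List.replicate s r) = 2) ∧
      (Odd (m - r) ∧ 3 ≤ m - r → SG (List.replicate m n ++ List.replicate s r) = 0) ∧
      (Even (m - r) ∧ 4 ≤ m - r → SG (List.replicate m n ++ List.replicate s r) = 1)) := by
  have hG : SG (List.replicate m n ++ List.replicate s r) = G (n - r) m r s :=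
    gam_eq_aux (n + m) n m r s le_rfl hn hr hm0 hs
  constructor
  · intro hA
    have hA' : ¬((n - r) % 2 = 1 ∧ 3 ≤ n - r) := by
      rcases hA with h | h | ⟨h1, h2⟩
      · omega
      · omega
      · rw [Nat.even_iff] at h2; omega
    constructor
    · intro hev
      rw [Nat.even_iff] at hev
      rw [hG, G]; split_ifs <;> omega
    · intro hod
      rw [Nat.odd_iff] at hod
      rw [hG, G]; split_ifs <;> omega
  · rintro ⟨h1, h2⟩
    rw [Nat.odd_iff] at h2
    refine ⟨fun hm1 => ?_, fun hm2 => ?_, fun h3 => ?_, fun h4 => ?_⟩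
    · rw [hG, G]; split_ifs <;> omega
    · rw [hG, G]; split_ifs <;> omega
    · obtain ⟨h3a, h3b⟩ := h3; rw [Nat.odd_iff] at h3a
      rw [hG, G]; split_ifs <;> omega
    · obtain ⟨h4a, h4b⟩ := h4; rw [Nat.even_iff] at h4a
      rw [hG, G]; split_ifs <;> omega
end
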